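/- Let f : ℝⁿ → ℝ be a positive Borel density (∫ f = 1). If for every y ∈ ℝⁿ the map x ↦ f(x+y)/f(x) is log-concave, then for every y the map x ↦ f(x+y)/f(x) is log-convex. -/
import Mathlib


open MeasureTheory

theorem stmt7 {n : ℕ} (f : (Fin n → ℝ) → ℝ)
    (hmeas : Measurable f) (hpos : ∀ x, 0 < f x)
    (hint : ∫ x, f x = 1)
    (hlc : ∀ y : Fin n → ℝ,
      ConcaveOn ℝ Set.univ (fun x => Real.log (f (x + y) / f x))) :
    ∀ y : Fin n → ℝ,
      ConvexOn ℝ Set.univ (fun x => Real.log (f (x + y) / f x)) := by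
  intro y
  have h := ((hlc (-y)).comp_affineMap
      ((AffineEquiv.constVAdd ℝ (Fin n → ℝ) y).toAffineMap)).neg
  have hs : (AffineEquiv.constVAdd ℝ (Fin n → ℝ) y).toAffineMap ⁻¹'
      (Set.univ : Set (Fin n → ℝ)) = Set.univ := Set.preimage_univ
  rw [hs] at h
  have hf : (fun x => Real.log (f (x + y) / f x)) =
      -((fun x => Real.log (f (x + -y) / f x)) ∘
        (AffineEquiv.constVAdd ℝ (Fin n → ℝ) y).toAffineMap) := by
    funext x
    simp only [Function.comp, AffineEquiv.coe_toAffineMap,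
      AffineEquiv.constVAdd_apply, vadd_eq_add, Pi.neg_apply]
    have hx : y + x + -y = x := by abel
    rw [hx, Real.log_div (hpos _).ne' (hpos _).ne',
      Real.log_div (hpos _).ne' (hpos _).ne', add_comm x y]
    ring
  rw [hf]
  exact h
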